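/- For t = 1: the number of extremal XYX-avoiding words over a k-letter alphabet is k!. Concretely, a word over a k-letter alphabet is extremal XYX-avoiding if and only if it has the form a_{i₁}a_{i₁}a_{i₂}a_{i₂}⋯a_{i_k}a_{i_k} for some permutation (i₁,…,i_k) of [k]. -/

import Mathlib

/-- `E` is an extension of `W`: `W` with one letter inserted at some position. -/
def Extends {A : Type*} (W E : List A) : Prop :=
  ∃ (W₁ W₂ : List A) (x : A), W = W₁ ++ W₂ ∧ E = W₁ ++ x :: W₂

/-- `WW'` is an almost-square: `W'` is an extension of `W`, or `W'` is obtained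
from `W` by deleting one letter (equivalently, `W` is an extension of `W'`). -/
def AlmostSq {A : Type*} (W W' : List A) : Prop :=
  Extends W W' ∨ Extends W' W

/-- `U` contains a square (a nonempty factor of the form `X ++ X`). -/
def HasSquare {A : Type*} (U : List A) : Prop :=
  ∃ X : List A, X ≠ [] ∧ X ++ X <:+: U

def SquareFree {A : Type*} (U : List A) : Prop := ¬ HasSquare U

/-- `F` realizes the pattern `X Y₁ X Y₂ X ⋯ X Y_t X` (with `2*t+1` nonempty blocks,
all odd-indexed blocks equal to `X`). -/
def RealizesPat {A : Type*} (t : ℕ) (F : List A) : Prop :=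
  ∃ (X : List A) (Y : Fin t → List A), X ≠ [] ∧ (∀ i, Y i ≠ []) ∧
    F = X ++ (List.ofFn (fun i => Y i ++ X)).flatten

/-- `W` contains the pattern `X Y₁ X ⋯ X Y_t X`. -/
def ContainsPat {A : Type*} (t : ℕ) (W : List A) : Prop :=
  ∃ F : List A, F <:+: W ∧ RealizesPat t F

/-- `W` is extremal `X Y₁ X ⋯ X Y_t X`-avoiding over the alphabet `A`. -/
def ExtremalPat {A : Type*} (t : ℕ) (W : List A) : Prop :=
  ¬ ContainsPat t W ∧ ∀ E : List A, Extends W E → ContainsPat t E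

/-- `W` is extremal square-free over the alphabet `A`. -/
def ExtremalSF {A : Type*} (W : List A) : Prop :=
  SquareFree W ∧ ∀ E : List A, Extends W E → HasSquare E

namespace Stmt2Aux

variable {A : Type*}

/-- Doubling: `D [a,b,c] = [a,a,b,b,c,c]`. -/
def D (L : List A) : List A := (L.map fun a => [a, a]).flatten

@[simp] lemma D_nil : D ([] : List A) = [] := rfl
@[simp] lemma D_cons (a : A) (L : List A) : D (a :: L) = a :: a :: D L := rfl

lemma D_get (L : List A) : ∀ m, (D L)[m]? = L[m / 2]? := by
  induction L with
  | nil => intro m; simp [D]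
  | cons a L ih =>
    intro m
    match m with
    | 0 => simp
    | 1 => simp
    | (m + 2) =>
      have h2 : (m + 2) / 2 = m / 2 + 1 := by omega
      simp only [D_cons, List.getElem?_cons_succ, h2]
      exact ih m

@[simp] lemma mem_D {x : A} {L : List A} : x ∈ D L ↔ x ∈ L := by
  induction L with
  | nil => simp [D]
  | cons a L ih => simp [ih]

lemma D_inj {L L' : List A} (h : D L = D L') : L = L' := by
  apply List.ext_getElem?
  intro n
  have := congrArg (fun l : List A => l[2 * n]?) h
  simpa only [D_get, Nat.mul_div_cancel_left n (by norm_num : 0 < 2),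
    (by omega : 2 * n / 2 = n)] using this

/-- Index-based avoidance. -/
def Avoid (W : List A) : Prop :=
  ∀ i j : ℕ, i + 2 ≤ j → W[i]? = W[j]? → W[j]? = none

lemma containsPat_one_iff (W : List A) :
    ContainsPat 1 W ↔ ∃ i j : ℕ, i + 2 ≤ j ∧ W[i]? = W[j]? ∧ W[j]? ≠ none := by
  constructor
  · rintro ⟨F, hF, X, Y, hX, hY, hFeq⟩
    have hFeq' : F = X ++ (Y 0 ++ X) := by
      simpa [List.ofFn_succ] using hFeq
    obtain ⟨a, X', rfl⟩ := List.exists_cons_of_ne_nil hX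
    obtain ⟨P, S, hPS⟩ := hF
    have hW : W = (P ++ a :: (X' ++ Y 0)) ++ a :: (X' ++ S) := by
      rw [← hPS, hFeq']; simp
    refine ⟨P.length, (P ++ a :: (X' ++ Y 0)).length, ?_, ?_, ?_⟩
    · have h0 : 0 < (Y 0).length := List.length_pos_of_ne_nil (hY 0)
      simp only [List.length_append, List.length_cons]
      omega
    · have h1 : W[P.length]? = some a := by
        rw [← hPS, hFeq']
        rw [show P ++ (a :: X' ++ (Y 0 ++ a :: X')) ++ S
            = P ++ a :: (X' ++ Y 0 ++ a :: X' ++ S) by simp]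
        rw [List.getElem?_append_right le_rfl]
        simp
      have h2 : W[(P ++ a :: (X' ++ Y 0)).length]? = some a := by
        rw [hW, List.getElem?_append_right le_rfl]
        simp
      rw [h1, h2]
    · rw [hW, List.getElem?_append_right le_rfl]
      simp
  · rintro ⟨i, j, hij, heq, hne⟩
    obtain ⟨a, ha⟩ : ∃ a, W[j]? = some a := Option.ne_none_iff_exists'.mp hne
    have hj : j < W.length := by
      by_contra h
      exact hne (List.getElem?_eq_none (by omega))
    have hi : i < W.length := by omega
    have hia : W[i]? = some a := heq.trans ha
    set Y := (W.drop (i + 1)).take (j - (i + 1)) with hYdef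
    have hYne : Y ≠ [] := by
      apply List.ne_nil_of_length_pos
      rw [hYdef, List.length_take, List.length_drop]
      omega
    have hWsplit : W = W.take i ++ (a :: (Y ++ [a])) ++ W.drop (j + 1) := by
      conv_lhs => rw [← List.take_append_drop i W]
      rw [List.drop_eq_getElem_cons hi]
      have hWi : W[i] = a := by
        have := List.getElem?_eq_getElem hi
        rw [hia] at this; exact (Option.some_injective _ this.symm)
      rw [hWi]
      conv_lhs => rw [← List.take_append_drop (j - (i + 1)) (W.drop (i + 1))]
      rw [List.drop_drop, show i + 1 + (j - (i + 1)) = j by omega,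
        List.drop_eq_getElem_cons hj]
      have hWj : W[j] = a := by
        have := List.getElem?_eq_getElem hj
        rw [ha] at this; exact (Option.some_injective _ this.symm)
      rw [hWj]
      simp [hYdef]
    refine ⟨a :: (Y ++ [a]), ⟨W.take i, W.drop (j + 1), hWsplit.symm⟩,
      [a], fun _ => Y, by simp, fun _ => hYne, ?_⟩
    simp [List.ofFn_succ]
  
lemma avoid_iff (W : List A) : Avoid W ↔ ¬ ContainsPat 1 W := by
  rw [containsPat_one_iff]
  push_neg
  constructor
  · intro h i j hij heq; exact h i j hij heq
  · intro h i j hij heq; exact h i j hij heq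

/- insertion lemmas -/
lemma ins_lt (W₁ W₂ : List A) (x : A) {m : ℕ} (h : m < W₁.length) :
    (W₁ ++ x :: W₂)[m]? = (W₁ ++ W₂)[m]? := by
  rw [List.getElem?_append_left h, List.getElem?_append_left h]

lemma ins_eq (W₁ W₂ : List A) (x : A) :
    (W₁ ++ x :: W₂)[W₁.length]? = some x := by
  rw [List.getElem?_append_right le_rfl]; simp

lemma ins_gt (W₁ W₂ : List A) (x : A) {m : ℕ} (h : W₁.length ≤ m) :
    (W₁ ++ x :: W₂)[m + 1]? = (W₁ ++ W₂)[m]? := by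
  rw [List.getElem?_append_right (by omega : W₁.length ≤ m + 1),
    List.getElem?_append_right h,
    show m + 1 - W₁.length = (m - W₁.length) + 1 by omega]
  simp

/-- Extremal words are complete: every letter appears. -/
lemma extremal_complete (W : List A) (h : ExtremalPat 1 W) (x : A) : x ∈ W := by
  by_contra hx
  have hext : Extends W (W ++ [x]) := ⟨W, [], x, by simp, rfl⟩
  have hcont := h.2 _ hext
  have hav : Avoid (W ++ [x]) := by
    intro i j hij heq
    rcases lt_trichotomy j W.length with hj | hj | hj
    · rw [List.getElem?_append_left hj] at heq ⊢
      rw [List.getElem?_append_left (by omega)] at heq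
      exact ((avoid_iff W).mpr h.1) i j hij heq
    · subst hj
      have h1 : (W ++ [x])[W.length]? = some x := ins_eq W [] x
      rw [h1] at heq
      rw [List.getElem?_append_left (by omega)] at heq
      exact absurd (List.mem_iff_getElem?.mpr ⟨i, heq⟩) hx
    · apply List.getElem?_eq_none
      simp; omega
  exact ((avoid_iff _).mp hav) hcont

/-- In an extremal word, every occurrence has an adjacent equal occurrence. -/
lemma extremal_adj (W : List A) (h : ExtremalPat 1 W) :
    ∀ (i : ℕ) (x : A), W[i]? = some x →
      W[i + 1]? = some x ∨ ∃ i', i = i' + 1 ∧ W[i']? = some x := by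
  intro i x hi
  by_contra hcon
  push_neg at hcon
  obtain ⟨h1, h2⟩ := hcon
  have hAv : Avoid W := (avoid_iff W).mpr h.1
  have hilen : i < W.length := by
    by_contra hc
    rw [List.getElem?_eq_none (by omega)] at hi; cases hi
  have huniq : ∀ j, W[j]? = some x → j = i := by
    intro j hj
    rcases lt_trichotomy j i with hji | hji | hji
    · rcases Nat.eq_or_lt_of_le hji with he | hl
      · exact absurd hj (h2 j (by omega))
      · have := hAv j i (by omega) (hj.trans hi.symm)
        rw [this] at hi; cases hi
    · exact hji
    · rcases Nat.eq_or_lt_of_le hji with he | hl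
      · subst he; exact absurd hj h1
      · have := hAv i j (by omega) (hi.trans hj.symm)
        rw [this] at hj; cases hj
  set E := W.take i ++ x :: W.drop i with hE
  have hext : Extends W E := ⟨W.take i, W.drop i, x, (List.take_append_drop i W).symm, rfl⟩
  have ntake : (W.take i).length = i := by
    rw [List.length_take]; omega
  have hWTD : W.take i ++ W.drop i = W := List.take_append_drop i W
  have hEm_lt : ∀ m < i, E[m]? = W[m]? := by
    intro m hm
    rw [hE, ins_lt _ _ _ (by omega), hWTD]
  have hEm_eq : E[i]? = some x := by
    have := ins_eq (W.take i) (W.drop i) x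
    rwa [ntake] at this
  have hEm_gt : ∀ m, i ≤ m → E[m + 1]? = W[m]? := by
    intro m hm
    rw [hE, ins_gt _ _ _ (by omega), hWTD]
  have hav : Avoid E := by
    intro a b hab heq
    rcases lt_trichotomy b i with hb | hb | hb
    · rw [hEm_lt a (by omega), hEm_lt b hb] at heq
      rw [hEm_lt b hb]
      exact hAv a b hab heq
    · subst hb
      rw [hEm_eq, hEm_lt a (by omega)] at heq
      exact absurd (huniq a heq) (by omega)
    · obtain ⟨b', rfl⟩ : ∃ b', b = b' + 1 := ⟨b - 1, by omega⟩
      have hb' : i ≤ b' := by omega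
      rw [hEm_gt b' hb'] at heq ⊢
      rcases lt_trichotomy a i with ha | ha | ha
      · rw [hEm_lt a ha] at heq
        rcases Nat.lt_or_ge (a + 2) (b' + 1) with hc | hc
        · exact hAv a b' (by omega) heq
        · -- b' = a + 1, and a < i ≤ b' so i = a + 1 = b'
          have hbi : b' = i := by omega
          rw [hbi, hi] at heq
          exact absurd (huniq a heq) (by omega)
      · subst ha
        rw [hEm_eq] at heq
        have := huniq b' heq.symm
        omega
      · obtain ⟨a', rfl⟩ : ∃ a', a = a' + 1 := ⟨a - 1, by omega⟩
        rw [hEm_gt a' (by omega)] at heq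
        exact hAv a' b' (by omega) heq
  exact ((avoid_iff _).mp hav) (h.2 E hext)

/-- Any word avoiding the pattern in which every occurrence has an adjacent equal
occurrence is a doubled word of a nodup list. -/
lemma build : ∀ (n : ℕ) (W : List A), W.length ≤ n → Avoid W →
    (∀ (i : ℕ) (x : A), W[i]? = some x →
      W[i + 1]? = some x ∨ ∃ i', i = i' + 1 ∧ W[i']? = some x) →
    ∃ L : List A, L.Nodup ∧ W = D L := by
  intro n
  induction n with
  | zero =>
    intro W hlen _ _
    have : W = [] := List.length_eq_zero_iff.mp (by omega)
    exact ⟨[], List.nodup_nil, by simp [this]⟩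
  | succ n ih =>
    intro W hlen hAv hadj
    match W with
    | [] => exact ⟨[], List.nodup_nil, by simp⟩
    | (a :: W') =>
      have h0 : (a :: W')[0]? = some a := by simp
      rcases hadj 0 a h0 with h1 | ⟨i', hi', _⟩
      swap
      · omega
      match W' with
      | [] => simp at h1
      | (b :: W'') =>
        have hba : b = a := by simpa using h1
        subst hba
        have hAv'' : Avoid W'' := by
          intro i j hij heq
          have := hAv (i + 2) (j + 2) (by omega) (by simpa using heq)
          simpa using this
        have hnotmem : b ∉ W'' := by
          intro hmem
          obtain ⟨m, hm⟩ := List.mem_iff_getElem?.mp hmem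
          have := hAv 0 (m + 2) (by omega) (by simpa using hm.symm)
          simp [hm] at this
        have hadj'' : ∀ (i : ℕ) (x : A), W''[i]? = some x →
            W''[i + 1]? = some x ∨ ∃ i', i = i' + 1 ∧ W''[i']? = some x := by
          intro i x hi
          rcases hadj (i + 2) x (by simpa using hi) with hl | ⟨i', hii', hgi'⟩
          · left; simpa using hl
          · right
            match i, hii' with
            | 0, hii' =>
              -- i' = 1, so W[1]? = some x means x = b, contradicting b ∉ W''
              have hi1 : i' = 1 := by omega
              subst hi1
              have : x = b := by simpa using hgi'.symm
              subst this
              exact absurd (List.mem_iff_getElem?.mpr ⟨0, hi⟩) hnotmem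
            | (m + 1), hii' =>
              have hi1 : i' = m + 2 := by omega
              subst hi1
              exact ⟨m, rfl, by simpa using hgi'⟩
        obtain ⟨L', hnd', hW''⟩ := ih W'' (by simp at hlen ⊢; omega) hAv'' hadj''
        refine ⟨b :: L', List.nodup_cons.mpr ⟨?_, hnd'⟩, by simp [hW'']⟩
        rw [← mem_D, ← hW'']
        exact hnotmem

/-- The doubled word of a nodup complete list is extremal. -/
lemma extremal_of (L : List A) [Finite A] (nd : L.Nodup) (cpl : ∀ x : A, x ∈ L) :
    ExtremalPat 1 (D L) := by
  constructor
  · rw [← avoid_iff]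
    intro i j hij heq
    simp only [D_get] at heq ⊢
    by_contra hne
    have hjlen : j / 2 < L.length := by
      by_contra hc
      exact hne (List.getElem?_eq_none (by omega))
    have := (List.getElem?_inj (l := L) (i := i / 2) (j := j / 2) (by omega) nd).mp heq
    omega
  · rintro E ⟨W₁, W₂, x, hW, hEeq⟩
    obtain ⟨p, hp⟩ := List.mem_iff_getElem?.mp (cpl x)
    have hplen : p < L.length := by
      by_contra hc
      rw [List.getElem?_eq_none (by omega)] at hp; cases hp
    have hg1 : (D L)[2 * p]? = some x := by
      rw [D_get, show 2 * p / 2 = p by omega]; exact hp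
    have hg2 : (D L)[2 * p + 1]? = some x := by
      rw [D_get, show (2 * p + 1) / 2 = p by omega]; exact hp
    set nn := W₁.length with hnn
    have hE_lt : ∀ m < nn, E[m]? = (D L)[m]? := by
      intro m hm
      rw [hEeq, ins_lt _ _ _ (by omega), ← hW]
    have hE_eq : E[nn]? = some x := by
      rw [hEeq]; exact ins_eq _ _ _
    have hE_gt : ∀ m, nn ≤ m → E[m + 1]? = (D L)[m]? := by
      intro m hm
      rw [hEeq, ins_gt _ _ _ (by omega), ← hW]
    rw [containsPat_one_iff]
    rcases Nat.lt_or_ge nn (2 * p + 1) with hc | hc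
    · -- nn ≤ 2p : positions nn and 2p + 2
      refine ⟨nn, 2 * p + 2, by omega, ?_, ?_⟩
      · rw [hE_eq, show 2 * p + 2 = (2 * p + 1) + 1 by omega, hE_gt _ (by omega), hg2]
      · rw [show 2 * p + 2 = (2 * p + 1) + 1 by omega, hE_gt _ (by omega), hg2]
        simp
    · rcases Nat.eq_or_lt_of_le hc with hc2 | hc2
      · -- nn = 2p + 1 : positions 2p and 2p + 2
        refine ⟨2 * p, 2 * p + 2, by omega, ?_, ?_⟩
        · rw [hE_lt _ (by omega), hg1,
            show 2 * p + 2 = (2 * p + 1) + 1 by omega, hE_gt _ (by omega), hg2]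
        · rw [show 2 * p + 2 = (2 * p + 1) + 1 by omega, hE_gt _ (by omega), hg2]
          simp
      · -- 2p + 2 ≤ nn : positions 2p and nn
        refine ⟨2 * p, nn, by omega, ?_, by rw [hE_eq]; simp⟩
        rw [hE_lt _ (by omega), hg1, hE_eq]

lemma D_ofFn {k : ℕ} (σ : Fin k → A) :
    (List.ofFn (fun i => [σ i, σ i])).flatten = D (List.ofFn σ) := by
  rw [D, List.map_ofFn]
  rfl

end Stmt2Aux

theorem stmt2 (k : ℕ) :
    (∀ W : List (Fin k), ExtremalPat 1 W ↔
      ∃ σ : Equiv.Perm (Fin k), W = (List.ofFn (fun i => [σ i, σ i])).flatten) ∧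
    {W : List (Fin k) | ExtremalPat 1 W}.Finite ∧
    {W : List (Fin k) | ExtremalPat 1 W}.ncard = Nat.factorial k := by
  have main : ∀ W : List (Fin k), ExtremalPat 1 W ↔
      ∃ σ : Equiv.Perm (Fin k), W = (List.ofFn (fun i => [σ i, σ i])).flatten := by
    intro W
    constructor
    · intro hW
      obtain ⟨L, nd, hDL⟩ := Stmt2Aux.build W.length W le_rfl
        ((Stmt2Aux.avoid_iff W).mpr hW.1) (Stmt2Aux.extremal_adj W hW)
      have cpl : ∀ x : Fin k, x ∈ L := fun x =>
        Stmt2Aux.mem_D.mp (hDL ▸ Stmt2Aux.extremal_complete W hW x)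
      have hcard : L.toFinset = Finset.univ :=
        Finset.eq_univ_iff_forall.mpr (fun x => List.mem_toFinset.mpr (cpl x))
      have hlen : L.length = k := by
        have h1 := List.toFinset_card_of_nodup nd
        rw [hcard] at h1
        simpa using h1.symm
      have hinjget : Function.Injective
          (fun i : Fin k => L.get (Fin.cast hlen.symm i)) := by
        intro a b hab
        have := List.nodup_iff_injective_get.mp nd hab
        exact Fin.cast_injective _ this
      set σ := Equiv.ofBijective _ (Finite.injective_iff_bijective.mp hinjget) with hσ
      refine ⟨σ, ?_⟩
      rw [hDL, Stmt2Aux.D_ofFn]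
      congr 1
      apply List.ext_getElem (by simp [hlen])
      intro i h1 h2
      rw [List.getElem_ofFn]
      rfl
    · rintro ⟨σ, rfl⟩
      rw [Stmt2Aux.D_ofFn]
      exact Stmt2Aux.extremal_of _ (List.nodup_ofFn.mpr σ.injective)
        (fun x => List.mem_ofFn.mpr ⟨σ.symm x, by simp⟩)
  have hset : {W : List (Fin k) | ExtremalPat 1 W}
      = Set.range (fun σ : Equiv.Perm (Fin k) =>
          (List.ofFn (fun i => [σ i, σ i])).flatten) := by
    ext W
    simp only [Set.mem_setOf_eq, Set.mem_range, main W]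
    exact exists_congr (fun σ => eq_comm)
  have hinj : Function.Injective (fun σ : Equiv.Perm (Fin k) =>
      (List.ofFn (fun i => [σ i, σ i])).flatten) := by
    intro σ τ h
    simp only [Stmt2Aux.D_ofFn] at h
    have h2 := Stmt2Aux.D_inj h
    have h3 := List.ofFn_inj.mp h2
    exact Equiv.ext (fun i => congrFun h3 i)
  refine ⟨main, ?_, ?_⟩
  · rw [hset]; exact Set.finite_range _
  · rw [hset, ← Set.image_univ, Set.ncard_image_of_injective _ hinj, Set.ncard_univ,
      Nat.card_eq_fintype_card, Fintype.card_perm, Fintype.card_fin]
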